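/- Let M be a rank-d matroid on {1,…,m} with {1,…,d} a basis, and let A ∈ M_{d,m}(ℂ) realize M over ℂ. Then there exist G ∈ GL_d(ℂ) and a nonsingular diagonal matrix D of size m such that GAD lies in the reduced realization space of M, i.e., GAD realizes M, GAD = (I_d | Ã) for some Ã, and all entries of Ã in the normal frame of Ã equal 1. -/

import Mathlib

/-- `A` realizes the matroid `M` over `ℂ` (ground set `{1,…,m}` encoded as
`Fin d ⊕ Fin (m-d)`, where the left summand plays the role of `{1,…,d}`):
column subsets of `A` are linearly independent exactly when independent in `M`. -/
def Realizes {d k : ℕ} (M : Matroid (Fin d ⊕ Fin k))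
    (A : Matrix (Fin d) (Fin d ⊕ Fin k) ℂ) : Prop :=
  M.E = Set.univ ∧ ∀ J : Set (Fin d ⊕ Fin k),
    M.Indep J ↔ LinearIndependent ℂ (fun j : J => fun i => A i (j : Fin d ⊕ Fin k))

/-- `(i,j)` is the position of the topmost nonzero entry of column `j` of `Q`
(the first marking step in the construction of the normal frame). -/
def Topmost {n r : ℕ} (Q : Matrix (Fin n) (Fin r) ℂ) (i : Fin n) (j : Fin r) : Prop :=
  Q i j ≠ 0 ∧ ∀ i' : Fin n, i' < i → Q i' j = 0

/-- `(i,j)` is the position of the leftmost nonzero entry of row `i` of `Q` that was not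
marked in the first step (the second marking step). -/
def LeftNew {n r : ℕ} (Q : Matrix (Fin n) (Fin r) ℂ) (i : Fin n) (j : Fin r) : Prop :=
  Q i j ≠ 0 ∧ ¬ Topmost Q i j ∧ ∀ j' : Fin r, j' < j → (Q i j' = 0 ∨ Topmost Q i j')

/-- The normal frame of `Q`: the set of all positions marked in either step. -/
def NormalFrame {n r : ℕ} (Q : Matrix (Fin n) (Fin r) ℂ) : Set (Fin n × Fin r) :=
  {p | Topmost Q p.1 p.2 ∨ LeftNew Q p.1 p.2}

section Aux

variable {n r : ℕ}

open Classical in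
/-- The row index of the topmost nonzero entry of column `j`. -/
noncomputable def topIdx (Q : Matrix (Fin n) (Fin r) ℂ) (j : Fin r)
    (h : ∃ i, Q i j ≠ 0) : Fin n :=
  (Finset.univ.filter fun i => Q i j ≠ 0).min'
    (by obtain ⟨i, hi⟩ := h; exact ⟨i, by simp [hi]⟩)

open Classical in
lemma topIdx_topmost (Q : Matrix (Fin n) (Fin r) ℂ) (j : Fin r) (h : ∃ i, Q i j ≠ 0) :
    Topmost Q (topIdx Q j h) j := by
  constructor
  · have := Finset.min'_mem (Finset.univ.filter fun i => Q i j ≠ 0)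
      (by obtain ⟨i, hi⟩ := h; exact ⟨i, by simp [hi]⟩)
    simpa [topIdx] using this
  · intro i' hi'
    by_contra h0
    have hle : topIdx Q j h ≤ i' := Finset.min'_le _ _ (by simp [h0])
    exact absurd hi' (not_lt.2 hle)

lemma topmost_unique {Q : Matrix (Fin n) (Fin r) ℂ} {i i' : Fin n} {j : Fin r}
    (h1 : Topmost Q i j) (h2 : Topmost Q i' j) : i = i' := by
  rcases lt_trichotomy i i' with h | h | h
  · exact absurd (h2.2 i h) h1.1
  · exact h
  · exact absurd (h1.2 i' h) h2.1

lemma topmost_lt {Q : Matrix (Fin n) (Fin r) ℂ} {t i : Fin n} {j : Fin r}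
    (hT : Topmost Q t j) (hne : Q i j ≠ 0) (hnT : ¬ Topmost Q i j) : t < i := by
  rcases lt_trichotomy t i with h | h | h
  · exact h
  · subst h; exact absurd hT hnT
  · exact absurd (hT.2 i h) hne

lemma leftNew_unique {Q : Matrix (Fin n) (Fin r) ℂ} {i : Fin n} {j j' : Fin r}
    (h1 : LeftNew Q i j) (h2 : LeftNew Q i j') : j = j' := by
  rcases lt_trichotomy j j' with h | h | h
  · rcases h2.2.2 j h with h0 | h0
    · exact absurd h0 h1.1
    · exact absurd h0 h1.2.1
  · exact h
  · rcases h1.2.2 j' h with h0 | h0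
    · exact absurd h0 h2.1
    · exact absurd h0 h2.2.1

open Classical in
/-- The row scaling factors, defined by recursion along the normal frame forest. -/
noncomputable def rowScale (Q : Matrix (Fin n) (Fin r) ℂ) (i : Fin n) : ℂ :=
  if h : ∃ j, LeftNew Q i j then
    rowScale Q (topIdx Q (Classical.choose h) ⟨i, (Classical.choose_spec h).1⟩) *
      Q (topIdx Q (Classical.choose h) ⟨i, (Classical.choose_spec h).1⟩) (Classical.choose h) /
      Q i (Classical.choose h)
  else 1
termination_by i.val
decreasing_by
  exact topmost_lt (topIdx_topmost _ _ _) (Classical.choose_spec h).1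
    (Classical.choose_spec h).2.1

open Classical in
lemma rowScale_ne_zero (Q : Matrix (Fin n) (Fin r) ℂ) (i : Fin n) : rowScale Q i ≠ 0 := by
  suffices H : ∀ m : ℕ, ∀ i : Fin n, i.val < m → rowScale Q i ≠ 0 from
    H (i.val + 1) i (Nat.lt_succ_self _)
  intro m
  induction m with
  | zero => intro i h; omega
  | succ m ih =>
    intro i hi
    by_cases h : ∃ j, LeftNew Q i j
    · rw [rowScale, dif_pos h]
      have hspec := Classical.choose_spec h
      have htop := topIdx_topmost Q (Classical.choose h) ⟨i, hspec.1⟩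
      have hlt : topIdx Q (Classical.choose h) ⟨i, hspec.1⟩ < i :=
        topmost_lt htop hspec.1 hspec.2.1
      exact div_ne_zero (mul_ne_zero (ih _ (by omega)) htop.1) hspec.1
    · rw [rowScale, dif_neg h]; exact one_ne_zero

open Classical in
lemma rowScale_of_leftNew {Q : Matrix (Fin n) (Fin r) ℂ} {i t : Fin n} {j : Fin r}
    (h : LeftNew Q i j) (ht : Topmost Q t j) :
    rowScale Q i = rowScale Q t * Q t j / Q i j := by
  have h' : ∃ j', LeftNew Q i j' := ⟨j, h⟩
  rw [rowScale, dif_pos h']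
  have hspec := Classical.choose_spec h'
  have hjj : j = Classical.choose h' := leftNew_unique h hspec
  have hteq : topIdx Q (Classical.choose h') ⟨i, hspec.1⟩ = t :=
    topmost_unique (topIdx_topmost _ _ _) (hjj ▸ ht)
  rw [hteq, ← hjj]

/-- The column scaling factors. -/
noncomputable def colScale (Q : Matrix (Fin n) (Fin r) ℂ) (j : Fin r) : ℂ :=
  if h : ∃ i, Q i j ≠ 0 then
    (rowScale Q (topIdx Q j h) * Q (topIdx Q j h) j)⁻¹
  else 1

lemma colScale_ne_zero (Q : Matrix (Fin n) (Fin r) ℂ) (j : Fin r) : colScale Q j ≠ 0 := by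
  by_cases h : ∃ i, Q i j ≠ 0
  · rw [colScale, dif_pos h]
    exact inv_ne_zero (mul_ne_zero (rowScale_ne_zero _ _) (topIdx_topmost Q j h).1)
  · rw [colScale, dif_neg h]; exact one_ne_zero

lemma topmost_scale_iff {Q : Matrix (Fin n) (Fin r) ℂ} {a : Fin n → ℂ} {b : Fin r → ℂ}
    (ha : ∀ i, a i ≠ 0) (hb : ∀ j, b j ≠ 0) (i : Fin n) (j : Fin r) :
    Topmost (Matrix.of fun i j => a i * Q i j * b j) i j ↔ Topmost Q i j := by
  unfold Topmost
  simp only [Matrix.of_apply, mul_eq_zero, ne_eq]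
  constructor
  · rintro ⟨h1, h2⟩
    refine ⟨fun h0 => h1 (Or.inl (Or.inr h0)), fun i' hi' => ?_⟩
    rcases h2 i' hi' with (h | h) | h
    · exact absurd h (ha i')
    · exact h
    · exact absurd h (hb j)
  · rintro ⟨h1, h2⟩
    exact ⟨by simp [ha i, hb j, h1], fun i' hi' => Or.inl (Or.inr (h2 i' hi'))⟩

lemma leftNew_scale_iff {Q : Matrix (Fin n) (Fin r) ℂ} {a : Fin n → ℂ} {b : Fin r → ℂ}
    (ha : ∀ i, a i ≠ 0) (hb : ∀ j, b j ≠ 0) (i : Fin n) (j : Fin r) :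
    LeftNew (Matrix.of fun i j => a i * Q i j * b j) i j ↔ LeftNew Q i j := by
  unfold LeftNew
  simp only [Matrix.of_apply, topmost_scale_iff ha hb, mul_eq_zero, ne_eq]
  constructor
  · rintro ⟨h1, h2, h3⟩
    refine ⟨fun h0 => h1 (Or.inl (Or.inr h0)), h2, fun j' hj' => ?_⟩
    rcases h3 j' hj' with ((h | h) | h) | h
    · exact absurd h (ha i)
    · exact Or.inl h
    · exact absurd h (hb j')
    · exact Or.inr h
  · rintro ⟨h1, h2, h3⟩
    refine ⟨by simp [ha i, hb j, h1], h2, fun j' hj' => ?_⟩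
    rcases h3 j' hj' with h | h
    · exact Or.inl (Or.inl (Or.inr h))
    · exact Or.inr h

lemma scale_topmost_eq_one {Q : Matrix (Fin n) (Fin r) ℂ} {i : Fin n} {j : Fin r}
    (h : Topmost Q i j) :
    rowScale Q i * Q i j * colScale Q j = 1 := by
  have hcol : ∃ i', Q i' j ≠ 0 := ⟨i, h.1⟩
  rw [colScale, dif_pos hcol]
  have hteq : topIdx Q j hcol = i := topmost_unique (topIdx_topmost _ _ _) h
  rw [hteq]
  exact mul_inv_cancel₀ (mul_ne_zero (rowScale_ne_zero _ _) h.1)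

lemma scale_leftNew_eq_one {Q : Matrix (Fin n) (Fin r) ℂ} {i : Fin n} {j : Fin r}
    (h : LeftNew Q i j) :
    rowScale Q i * Q i j * colScale Q j = 1 := by
  have hcol : ∃ i', Q i' j ≠ 0 := ⟨i, h.1⟩
  rw [colScale, dif_pos hcol]
  have ht := topIdx_topmost Q j hcol
  rw [rowScale_of_leftNew h ht]
  have h1 : rowScale Q (topIdx Q j hcol) ≠ 0 := rowScale_ne_zero _ _
  have h2 : Q (topIdx Q j hcol) j ≠ 0 := ht.1
  have h3 : Q i j ≠ 0 := h.1
  field_simp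

end Aux

lemma li_units_smul_iff {ι : Type*} {d : ℕ} (u : ι → ℂˣ) (v : ι → (Fin d → ℂ)) :
    LinearIndependent ℂ (fun i => (u i : ℂ) • v i) ↔ LinearIndependent ℂ v := by
  constructor
  · intro h
    have h2 := h.units_smul fun i => (u i)⁻¹
    have he : ((fun i => (u i)⁻¹) • fun i => (u i : ℂ) • v i) = v := by
      funext i; simp [Units.smul_def, smul_smul]
    rwa [he] at h2
  · intro h
    have h2 := h.units_smul u
    have he : (u • v) = fun i => (u i : ℂ) • v i := by
      funext i; simp [Units.smul_def]
    rwa [he] at h2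

lemma realizes_mul {d k : ℕ} {M : Matroid (Fin d ⊕ Fin k)}
    {A : Matrix (Fin d) (Fin d ⊕ Fin k) ℂ} (hA : Realizes M A)
    {G : Matrix (Fin d) (Fin d) ℂ} (hG : IsUnit G.det)
    {D : Fin d ⊕ Fin k → ℂ} (hD : ∀ j, D j ≠ 0) :
    Realizes M (G * A * Matrix.diagonal D) := by
  refine ⟨hA.1, fun J => (hA.2 J).trans ?_⟩
  have hGu : IsUnit G := (Matrix.isUnit_iff_isUnit_det G).2 hG
  have hinj : Function.Injective G.mulVec := Matrix.mulVec_injective_iff_isUnit.2 hGu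
  have hker : LinearMap.ker G.mulVecLin = ⊥ := LinearMap.ker_eq_bot.2 (by
    simpa [Matrix.coe_mulVecLin] using hinj)
  have hfam : (fun j : J => fun i => (G * A * Matrix.diagonal D) i (j : Fin d ⊕ Fin k)) =
      fun j : J => ((Units.mk0 (D (j : Fin d ⊕ Fin k)) (hD _) : ℂˣ) : ℂ) •
        G.mulVecLin (fun i => A i (j : Fin d ⊕ Fin k)) := by
    funext j
    funext i
    show (G * A * Matrix.diagonal D) i (j : Fin d ⊕ Fin k) = _
    rw [Matrix.mul_diagonal, Matrix.mul_apply]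
    simp only [Matrix.mulVecLin_apply, Matrix.mulVec, dotProduct, Pi.smul_apply,
      Units.val_mk0, smul_eq_mul]
    ring
  rw [hfam, li_units_smul_iff]
  exact (G.mulVecLin.linearIndependent_iff hker).symm

/-- If `A` realizes a matroid `M` (on ground set `{1,…,m}`, with `{1,…,d}` a basis), then
there are `G ∈ GL_d(ℂ)` and a nonsingular diagonal matrix `D` such that `G·A·D` lies in
the reduced realization space of `M`: it realizes `M`, has the form `(I_d | Ã)`, and all
entries of `Ã` in the normal frame of `Ã` equal `1`. -/
theorem exists_reduced_form (d k : ℕ) (M : Matroid (Fin d ⊕ Fin k))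
    (hbase : M.IsBase (Set.range Sum.inl))
    (A : Matrix (Fin d) (Fin d ⊕ Fin k) ℂ) (hA : Realizes M A) :
    ∃ G : Matrix (Fin d) (Fin d) ℂ, IsUnit G.det ∧
      ∃ D : Fin d ⊕ Fin k → ℂ, (∀ j, D j ≠ 0) ∧
        Realizes M (G * A * Matrix.diagonal D) ∧
        ∃ At : Matrix (Fin d) (Fin k) ℂ,
          G * A * Matrix.diagonal D = Matrix.fromCols 1 At ∧
          ∀ p ∈ NormalFrame At, At p.1 p.2 = 1 := by
  classical
  set B : Matrix (Fin d) (Fin d) ℂ := Matrix.of fun i i' => A i (Sum.inl i') with hBdef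
  have hIndep : M.Indep (Set.range Sum.inl) := hbase.indep
  have hli := (hA.2 _).1 hIndep
  have hli2 : LinearIndependent ℂ (fun i' : Fin d => fun i => A i (Sum.inl i')) := by
    have h2 := (linearIndependent_equiv
      (Equiv.ofInjective (Sum.inl : Fin d → Fin d ⊕ Fin k) Sum.inl_injective)).2 hli
    have heq : ((fun j : (Set.range (Sum.inl : Fin d → Fin d ⊕ Fin k)) =>
        fun i => A i (j : Fin d ⊕ Fin k)) ∘
          (Equiv.ofInjective (Sum.inl : Fin d → Fin d ⊕ Fin k) Sum.inl_injective)) =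
        fun i' : Fin d => fun i => A i (Sum.inl i') := by
      funext i'
      simp [Equiv.ofInjective_apply]
    rwa [heq] at h2
  have hBdet : IsUnit B.det := by
    rw [← Matrix.isUnit_iff_isUnit_det, ← Matrix.linearIndependent_cols_iff_isUnit]
    exact hli2
  have hMul : B⁻¹ * B = 1 := Matrix.nonsing_inv_mul B hBdet
  set C : Matrix (Fin d) (Fin d ⊕ Fin k) ℂ := B⁻¹ * A with hCdef
  have hCl : ∀ i i', C i (Sum.inl i') = (1 : Matrix (Fin d) (Fin d) ℂ) i i' := by
    intro i i'
    have h1 : C i (Sum.inl i') = (B⁻¹ * B) i i' := by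
      simp [hCdef, Matrix.mul_apply, hBdef]
    rw [h1, hMul]
  set Q : Matrix (Fin d) (Fin k) ℂ := Matrix.of fun i j => C i (Sum.inr j) with hQdef
  set rS := rowScale Q with hrS
  set cS := colScale Q with hcS
  set G : Matrix (Fin d) (Fin d) ℂ := Matrix.diagonal rS * B⁻¹ with hGdef
  set D : Fin d ⊕ Fin k → ℂ := Sum.elim (fun i => (rS i)⁻¹) cS with hDdef
  set At : Matrix (Fin d) (Fin k) ℂ := Matrix.of fun i j => rS i * Q i j * cS j with hAtdef
  have hGdet : IsUnit G.det := by
    rw [hGdef, Matrix.det_mul]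
    refine IsUnit.mul ?_ (Matrix.isUnit_nonsing_inv_det B hBdet)
    rw [Matrix.det_diagonal]
    exact isUnit_iff_ne_zero.2 (Finset.prod_ne_zero_iff.2 fun i _ => rowScale_ne_zero Q i)
  have hDnz : ∀ j, D j ≠ 0 := by
    intro j
    cases j with
    | inl i => exact inv_ne_zero (rowScale_ne_zero Q i)
    | inr j => exact colScale_ne_zero Q j
  refine ⟨G, hGdet, D, hDnz, realizes_mul hA hGdet hDnz, At, ?_, ?_⟩
  · ext i j
    rw [hGdef, Matrix.mul_assoc (Matrix.diagonal rS) B⁻¹ A, ← hCdef]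
    cases j with
    | inl i' =>
      rw [Matrix.mul_diagonal, Matrix.diagonal_mul, hCl i i',
        Matrix.fromCols_apply_inl]
      by_cases h : i = i'
      · subst h
        simp [hDdef, Matrix.one_apply_eq, mul_inv_cancel₀ (show rS i ≠ 0 from rowScale_ne_zero Q i)]
      · simp [hDdef, Matrix.one_apply_ne h]
    | inr j =>
      rw [Matrix.mul_diagonal, Matrix.diagonal_mul, Matrix.fromCols_apply_inr]
      simp [hDdef, hAtdef, hQdef, mul_assoc]
  · intro p hp
    simp only [NormalFrame, Set.mem_setOf_eq] at hp
    rcases hp with h | h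
    · rw [hAtdef, topmost_scale_iff (rowScale_ne_zero Q) (colScale_ne_zero Q)] at h
      exact scale_topmost_eq_one h
    · rw [hAtdef, leftNew_scale_iff (rowScale_ne_zero Q) (colScale_ne_zero Q)] at h
      exact scale_leftNew_eq_one h
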